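/- Let n ≥ 2, k ≥ 0, and i ≥ 0 be integers, and let d = C(n+k, n) be the degree of regularity of the Kneser graph G = KG(2n+k, n). If C(2n+k, n) ≤ 2d + 2 − 2i (i.e., |V(G)| ≤ 2d + 2 − 2i), then the b-chromatic number satisfies φ(G) ≤ d − i. -/

import Mathlib

/-- The Kneser graph `KG(n, m)`: vertices are the `m`-element subsets of an
`n`-element set, adjacent iff disjoint. -/
def kneserGraph (n m : ℕ) : SimpleGraph {A : Finset (Fin n) // A.card = m} where
  Adj A B := A ≠ B ∧ Disjoint (A : Finset (Fin n)) (B : Finset (Fin n))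
  symm := ⟨fun _ _ h => ⟨h.1.symm, h.2.symm⟩⟩
  loopless := ⟨fun _ h => h.1 rfl⟩

/-- `f` is a proper coloring of `G`. -/
def IsProperColoring {V α : Type*} (G : SimpleGraph V) (f : V → α) : Prop :=
  ∀ v w : V, G.Adj v w → f v ≠ f w

/-- `v` is color-dominating w.r.t. the coloring `f`: every used color appears
in the closed neighborhood of `v`. -/
def IsColorDominating {V α : Type*} (G : SimpleGraph V) (f : V → α) (v : V) : Prop :=
  ∀ c ∈ Set.range f, f v = c ∨ ∃ w : V, G.Adj v w ∧ f w = c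

/-- `f` is a b-coloring of `G`: a proper coloring each of whose color classes
contains a color-dominating vertex. -/
def IsBColoring {V α : Type*} (G : SimpleGraph V) (f : V → α) : Prop :=
  IsProperColoring G f ∧
    ∀ c ∈ Set.range f, ∃ v : V, f v = c ∧ IsColorDominating G f v

/-- The b-chromatic number of `G`: the largest `k` such that `G` admits a
b-coloring with exactly `k` colors. -/
noncomputable def bChromaticNumber {V : Type*} (G : SimpleGraph V) : ℕ :=
  sSup {k : ℕ | ∃ f : V → Fin k, Function.Surjective f ∧ IsBColoring G f}

/-! ### Auxiliary lemmas -/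

/-- One step of monotonicity of binomial coefficients towards the middle. -/
lemma choose_step_aux (M j : ℕ) (h : 2 * j + 1 ≤ M) :
    M.choose j ≤ M.choose (j + 1) := by
  have h1 : M.choose (j + 1) * (j + 1) = M.choose j * (M - j) :=
    Nat.choose_succ_right_eq M j
  have h2 : M.choose j * (j + 1) ≤ M.choose j * (M - j) :=
    Nat.mul_le_mul_left _ (by omega)
  rw [← h1] at h2
  exact Nat.le_of_mul_le_mul_right h2 (Nat.succ_pos j)

/-- Monotonicity of binomial coefficients up to the middle. -/
lemma choose_two_le_choose (M n : ℕ) (hn : 2 ≤ n) (hM : 2 * n ≤ M) :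
    M.choose 2 ≤ M.choose n := by
  induction n, hn using Nat.le_induction with
  | base => exact le_rfl
  | succ j hj ih =>
      have h1 : M.choose 2 ≤ M.choose j := ih (by omega)
      exact h1.trans (choose_step_aux M j (by omega))

/-- The number of vertices of the Kneser graph. -/
lemma card_kneser_vertices (M n : ℕ) :
    Fintype.card {A : Finset (Fin M) // A.card = n} = M.choose n := by
  classical
  rw [Fintype.card_subtype]
  have h : (Finset.univ.filter fun s : Finset (Fin M) => s.card = n)
      = Finset.powersetCard n (Finset.univ : Finset (Fin M)) := by
    ext s
    simp [Finset.mem_powersetCard, Finset.subset_univ]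
  rw [h, Finset.card_powersetCard, Finset.card_univ, Fintype.card_fin]

section CoreCounting

variable {n k m : ℕ} (f : {A : Finset (Fin (2 * n + k)) // A.card = n} → Fin m)

/-- The color class of a color `c`. -/
def kclass (c : Fin m) : Finset {A : Finset (Fin (2 * n + k)) // A.card = n} :=
  Finset.univ.filter (fun v => f v = c)

/-- The "core" of a color class: the intersection of all its members. -/
def kcore (c : Fin m) : Finset (Fin (2 * n + k)) :=
  (kclass f c).inf (fun v => (v : Finset (Fin (2 * n + k))))

lemma mem_kclass {c : Fin m} {v : {A : Finset (Fin (2 * n + k)) // A.card = n}} :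
    v ∈ kclass f c ↔ f v = c := by
  simp [kclass]

lemma kcore_subset {c : Fin m} {v : {A : Finset (Fin (2 * n + k)) // A.card = n}}
    (hv : v ∈ kclass f c) : kcore f c ⊆ (v : Finset (Fin (2 * n + k))) :=
  Finset.inf_le (α := Finset (Fin (2 * n + k))) hv

/-- Cores of distinct color classes are disjoint. -/
lemma kcore_disjoint (hsurj : Function.Surjective f)
    (hb : IsBColoring (kneserGraph (2 * n + k) n) f)
    {c₁ c₂ : Fin m} (hne : c₁ ≠ c₂) : Disjoint (kcore f c₁) (kcore f c₂) := by
  rw [Finset.disjoint_left]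
  intro p hp1 hp2
  obtain ⟨A, hA, hAdom⟩ := hb.2 c₂ (Set.mem_range.2 (hsurj c₂))
  have hAcl : A ∈ kclass f c₂ := (mem_kclass f).2 hA
  have hpA : p ∈ (A : Finset (Fin (2 * n + k))) := kcore_subset f hAcl hp2
  rcases hAdom c₁ (Set.mem_range.2 (hsurj c₁)) with h | ⟨w, hadj, hw⟩
  · exact hne (hA ▸ h ▸ rfl)
  · have hwcl : w ∈ kclass f c₁ := (mem_kclass f).2 hw
    have hpw : p ∈ (w : Finset (Fin (2 * n + k))) := kcore_subset f hwcl hp1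
    exact (Finset.disjoint_left.1 hadj.2) hpA hpw

/-- Per-class inequality: class size plus core size is at least 3. -/
lemma kclass_add_kcore (hn : 2 ≤ n) (hsurj : Function.Surjective f)
    (hb : IsBColoring (kneserGraph (2 * n + k) n) f) (c : Fin m) :
    3 ≤ (kclass f c).card + (kcore f c).card := by
  obtain ⟨v, hv⟩ := hsurj c
  have hpos : 1 ≤ (kclass f c).card :=
    Finset.card_pos.2 ⟨v, (mem_kclass f).2 hv⟩
  rcases (show (kclass f c).card = 1 ∨ (kclass f c).card = 2 ∨ 3 ≤ (kclass f c).card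
    by omega) with h1 | h2 | h3
  · obtain ⟨u, hu⟩ := Finset.card_eq_one.1 h1
    have hcu : kcore f c = (u : Finset (Fin (2 * n + k))) := by
      rw [kcore, hu, Finset.inf_singleton]
    have : (kcore f c).card = n := by rw [hcu]; exact u.2
    omega
  · obtain ⟨a, b, hab, hs⟩ := Finset.card_eq_two.1 h2
    have hcv : kcore f c
        = (a : Finset (Fin (2 * n + k))) ∩ (b : Finset (Fin (2 * n + k))) := by
      rw [kcore, hs, Finset.inf_insert, Finset.inf_singleton, Finset.inf_eq_inter]
    have hfa : f a = c := (mem_kclass f).1 (hs ▸ Finset.mem_insert_self a {b})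
    have hfb : f b = c :=
      (mem_kclass f).1 (hs ▸ Finset.mem_insert_of_mem (Finset.mem_singleton_self b))
    have hnadj : ¬ (kneserGraph (2 * n + k) n).Adj a b := by
      intro h
      exact hb.1 a b h (hfa.trans hfb.symm)
    have hnd : ¬ Disjoint (a : Finset (Fin (2 * n + k))) (b : Finset (Fin (2 * n + k))) :=
      fun hd => hnadj ⟨hab, hd⟩
    have hne : ((a : Finset (Fin (2 * n + k))) ∩ (b : Finset (Fin (2 * n + k)))).Nonempty :=
      Finset.not_disjoint_iff_nonempty_inter.1 hnd
    have : 1 ≤ (kcore f c).card := by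
      rw [hcv]; exact Finset.card_pos.2 hne
    omega
  · omega

/-- **Core counting lemma.** Any surjective b-coloring of `KG(2n+k, n)` with `m`
colors (for `n ≥ 2`) satisfies `3m ≤ C(2n+k, n) + (2n+k)`. -/
lemma core_counting (hn : 2 ≤ n) (hsurj : Function.Surjective f)
    (hb : IsBColoring (kneserGraph (2 * n + k) n) f) :
    3 * m ≤ (2 * n + k).choose n + (2 * n + k) := by
  have hsum1 : ∑ c : Fin m, (kclass f c).card = (2 * n + k).choose n := by
    have h := Finset.card_eq_sum_card_fiberwise
      (f := f) (s := (Finset.univ : Finset {A : Finset (Fin (2 * n + k)) // A.card = n}))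
      (t := (Finset.univ : Finset (Fin m)))
      (fun x _ => Finset.mem_univ (f x))
    rw [Finset.card_univ, card_kneser_vertices] at h
    exact h.symm
  have hsum2 : ∑ c : Fin m, (kcore f c).card ≤ 2 * n + k := by
    rw [← Finset.card_biUnion (fun x _ y _ h => kcore_disjoint f hsurj hb h)]
    calc ((Finset.univ : Finset (Fin m)).biUnion (kcore f)).card
        ≤ (Finset.univ : Finset (Fin (2 * n + k))).card :=
          Finset.card_le_card (Finset.subset_univ _)
      _ = 2 * n + k := by simp
  have htot : 3 * m ≤ ∑ c : Fin m, ((kclass f c).card + (kcore f c).card) := by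
    calc 3 * m = ∑ _c : Fin m, 3 := by simp [Nat.mul_comm]
      _ ≤ ∑ c : Fin m, ((kclass f c).card + (kcore f c).card) :=
          Finset.sum_le_sum (fun c _ => kclass_add_kcore f hn hsurj hb c)
  rw [Finset.sum_add_distrib] at htot
  omega

end CoreCounting

/-- (Balakrishnan–Kavaskar) Let `n ≥ 2`, `k ≥ 0`, `i ≥ 0`, and let
`d = C(n+k, n)` be the degree of regularity of `G = KG(2n+k, n)`. If
`|V(G)| = C(2n+k, n) ≤ 2d + 2 - 2i`, then `φ(G) ≤ d - i`. -/
theorem bala_kavaskar {n k i : ℕ} (hn : 2 ≤ n)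
    (hcard : ((2 * n + k).choose n : ℤ) ≤ 2 * ((n + k).choose n : ℤ) + 2 - 2 * (i : ℤ)) :
    (bChromaticNumber (kneserGraph (2 * n + k) n) : ℤ) ≤ ((n + k).choose n : ℤ) - (i : ℤ) := by
  classical
  set N := (2 * n + k).choose n with hN
  set d := (n + k).choose n with hd
  have hNpos : 0 < N := Nat.choose_pos (by omega)
  -- from the hypothesis, `N ≤ 2d + 2` over ℕ
  have hNle : N ≤ 2 * d + 2 := by
    have hi : (0 : ℤ) ≤ (i : ℤ) := Int.ofNat_nonneg i
    have : (N : ℤ) ≤ 2 * (d : ℤ) + 2 := by omega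
    exact_mod_cast this
  -- the ground set is large: 2(2n+k) + 6 ≤ N
  have hbigN : 2 * (2 * n + k) + 6 ≤ N := by
    by_cases hM : 7 ≤ 2 * n + k
    · have h1 : (2 * n + k).choose 2 ≤ N := by
        rw [hN]; exact choose_two_le_choose (2 * n + k) n hn (by omega)
      have h2 : (2 * n + k).choose 2 = (2 * n + k) * ((2 * n + k) - 1) / 2 :=
        Nat.choose_two_right _
      have h3 : 6 * (2 * n + k) ≤ (2 * n + k) * ((2 * n + k) - 1) := by
        calc 6 * (2 * n + k) = (2 * n + k) * 6 := by ring
          _ ≤ (2 * n + k) * ((2 * n + k) - 1) := Nat.mul_le_mul_left _ (by omega)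
      have h4 : 3 * (2 * n + k) ≤ (2 * n + k) * ((2 * n + k) - 1) / 2 := by
        have := Nat.div_le_div_right (c := 2) h3
        omega
      omega
    · -- small ground set: the hypothesis is contradictory
      exfalso
      have hn3 : n ≤ 3 := by omega
      have hk : k ≤ 2 := by omega
      have hNle' : N ≤ 2 * d + 2 := hNle
      rw [hN, hd] at hNle'
      interval_cases n <;> interval_cases k <;> simp_all [Nat.choose]
  -- bound every cardinality admitting a surjective b-coloring
  have hkey : ∀ m ∈ {k' : ℕ | ∃ f : {A : Finset (Fin (2 * n + k)) // A.card = n} → Fin k',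
      Function.Surjective f ∧ IsBColoring (kneserGraph (2 * n + k) n) f}, m ≤ d - i := by
    intro m hm
    obtain ⟨f, hsurj, hb⟩ := hm
    have h3m : 3 * m ≤ N + (2 * n + k) := by
      rw [hN]; exact core_counting f hn hsurj hb
    -- 6m ≤ 2N + 2(2n+k) ≤ 3N - 6 ≤ 3(2d+2-2i) - 6 = 6d - 6i
    omega
  have hub : bChromaticNumber (kneserGraph (2 * n + k) n) ≤ d - i := by
    rw [bChromaticNumber]
    exact csSup_le' hkey
  have hid : i ≤ d := by omega
  have := (Nat.cast_le (α := ℤ)).2 hub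
  rw [Nat.cast_sub hid] at this
  exact this
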